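/- Let M be an n×n quaternionic matrix and λ ∈ ℂ ⊆ ℍ. Then λ is a right eigenvalue of M, i.e. there exists a nonzero column vector v ∈ ℍⁿ with M·v = v·λ (scalar acting on the right), if and only if det(λ·I_{2n} − ψ(M)) = 0. -/

import Mathlib

noncomputable section

/-- Simplex part of a quaternion: `q = Sc q + j * Pc q`. -/
def Sc (q : Quaternion ℝ) : ℂ := ⟨q.re, q.imI⟩

/-- Perplex part of a quaternion: `q = Sc q + j * Pc q`. -/
def Pc (q : Quaternion ℝ) : ℂ := ⟨q.imJ, -q.imK⟩

/-- The map ψ sending a quaternionic matrix `M = M^S + j·M^P` (symplectic decomposition)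
to the complex block matrix `[[M^S, -conj(M^P)], [M^P, conj(M^S)]]`. -/
def psi {I J : Type*} (M : Matrix I J (Quaternion ℝ)) :
    Matrix (I ⊕ I) (J ⊕ J) ℂ :=
  Matrix.fromBlocks (M.map Sc) (-((M.map Pc).map (starRingEnd ℂ)))
    (M.map Pc) ((M.map Sc).map (starRingEnd ℂ))
/-- The canonical embedding of ℂ into the quaternions (real span of 1 and i). -/
def toQuat (z : ℂ) : Quaternion ℝ := ⟨z.re, z.im, 0, 0⟩

lemma Sc_mul (p q : Quaternion ℝ) :
    Sc (p * q) = Sc p * Sc q - (starRingEnd ℂ) (Pc p) * Pc q := by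
  simp [Sc, Pc, Complex.ext_iff, Quaternion.re_mul, Quaternion.imI_mul]; constructor <;> ring

lemma Pc_mul (p q : Quaternion ℝ) :
    Pc (p * q) = Pc p * Sc q + (starRingEnd ℂ) (Sc p) * Pc q := by
  simp [Sc, Pc, Complex.ext_iff, Quaternion.imJ_mul, Quaternion.imK_mul]; constructor <;> ring

def ScHom : Quaternion ℝ →+ ℂ where
  toFun := Sc
  map_zero' := by simp [Sc, Complex.ext_iff, Quaternion.re_zero, Quaternion.imI_zero]
  map_add' := by intro a b; simp [Sc, Complex.ext_iff]

def PcHom : Quaternion ℝ →+ ℂ where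
  toFun := Pc
  map_zero' := by simp [Pc, Complex.ext_iff, Quaternion.imJ_zero, Quaternion.imK_zero]
  map_add' := by intro a b; simp [Pc, Complex.ext_iff]; ring

lemma Sc_zero : Sc 0 = 0 := ScHom.map_zero
lemma Pc_zero : Pc 0 = 0 := PcHom.map_zero

lemma Sc_toQuat (z : ℂ) : Sc (toQuat z) = z := by
  simp [Sc, toQuat, Complex.ext_iff]

lemma Pc_toQuat (z : ℂ) : Pc (toQuat z) = 0 := by
  simp [Pc, toQuat, Complex.ext_iff]

lemma ext_ScPc {p q : Quaternion ℝ} (h1 : Sc p = Sc q) (h2 : Pc p = Pc q) : p = q := by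
  simp only [Sc, Pc, Complex.ext_iff, neg_inj] at h1 h2
  ext <;> tauto

/-- j as a quaternion. -/
def jq : Quaternion ℝ := ⟨0, 0, 1, 0⟩

lemma Sc_recon (a b : ℂ) : Sc (toQuat a + jq * toQuat b) = a := by
  simp [Sc, Complex.ext_iff, Quaternion.re_add, Quaternion.imI_add, Quaternion.re_mul, Quaternion.imI_mul]; simp [toQuat, jq]

lemma Pc_recon (a b : ℂ) : Pc (toQuat a + jq * toQuat b) = b := by
  simp [Pc, Complex.ext_iff, Quaternion.imJ_add, Quaternion.imK_add, Quaternion.imJ_mul, Quaternion.imK_mul]; simp [toQuat, jq]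

lemma Sc_mul_toQuat (q : Quaternion ℝ) (z : ℂ) : Sc (q * toQuat z) = Sc q * z := by
  rw [Sc_mul, Sc_toQuat, Pc_toQuat]; ring

lemma Pc_mul_toQuat (q : Quaternion ℝ) (z : ℂ) : Pc (q * toQuat z) = Pc q * z := by
  rw [Pc_mul, Sc_toQuat, Pc_toQuat]; ring

lemma psi_mulVec (n : ℕ) (M : Matrix (Fin n) (Fin n) (Quaternion ℝ))
    (v : Fin n → Quaternion ℝ) :
    (psi M).mulVec (Sum.elim (fun r => Sc (v r)) (fun r => Pc (v r)))
      = Sum.elim (fun r => Sc (M.mulVec v r)) (fun r => Pc (M.mulVec v r)) := by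
  have hS : ∀ r, Sc (∑ c, M r c * v c) = ∑ c, Sc (M r c * v c) := fun r => map_sum ScHom _ _
  have hP : ∀ r, Pc (∑ c, M r c * v c) = ∑ c, Pc (M r c * v c) := fun r => map_sum PcHom _ _
  funext x
  cases x with
  | inl r =>
    simp only [Matrix.mulVec, dotProduct, Fintype.sum_sum_type, Sum.elim_inl, Sum.elim_inr,
      psi, Matrix.fromBlocks_apply₁₁, Matrix.fromBlocks_apply₁₂, Matrix.map_apply,
      Matrix.neg_apply]
    rw [hS r]
    rw [Finset.sum_congr rfl (fun c _ => Sc_mul (M r c) (v c)), Finset.sum_sub_distrib]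
    simp [sub_eq_add_neg, Finset.sum_neg_distrib]
  | inr r =>
    simp only [Matrix.mulVec, dotProduct, Fintype.sum_sum_type, Sum.elim_inl, Sum.elim_inr,
      psi, Matrix.fromBlocks_apply₂₁, Matrix.fromBlocks_apply₂₂, Matrix.map_apply]
    rw [hP r]
    rw [Finset.sum_congr rfl (fun c _ => Pc_mul (M r c) (v c)), Finset.sum_add_distrib]

/-- for an n×n quaternionic matrix M and λ ∈ ℂ ⊆ ℍ, λ is a right eigenvalue
of M (there is a nonzero v ∈ ℍⁿ with M·v = v·λ, the scalar acting on the right) iff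
det(λ·I_{2n} − ψ(M)) = 0. -/
theorem right_eigenvalue_iff_psi (n : ℕ) (M : Matrix (Fin n) (Fin n) (Quaternion ℝ))
    (lam : ℂ) :
    (∃ v : Fin n → Quaternion ℝ, v ≠ 0 ∧ M.mulVec v = fun r => v r * toQuat lam) ↔
    (lam • (1 : Matrix (Fin n ⊕ Fin n) (Fin n ⊕ Fin n) ℂ) - psi M).det = 0 := by
  rw [← Matrix.exists_mulVec_eq_zero_iff]
  have key : ∀ w : Fin n ⊕ Fin n → ℂ,
      (lam • (1 : Matrix (Fin n ⊕ Fin n) (Fin n ⊕ Fin n) ℂ) - psi M).mulVec w = 0 ↔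
      (psi M).mulVec w = lam • w := by
    intro w
    rw [Matrix.sub_mulVec, Matrix.smul_mulVec, Matrix.one_mulVec, sub_eq_zero, eq_comm]
  constructor
  · rintro ⟨v, hv, hev⟩
    refine ⟨Sum.elim (fun r => Sc (v r)) (fun r => Pc (v r)), ?_, ?_⟩
    · intro h0
      apply hv
      funext r
      have h1 : Sc (v r) = 0 := congrFun h0 (Sum.inl r)
      have h2 : Pc (v r) = 0 := congrFun h0 (Sum.inr r)
      exact ext_ScPc (q := 0) (by simpa [Sc_zero] using h1) (by simpa [Pc, Complex.ext_iff, Quaternion.imJ_zero, Quaternion.imK_zero] using h2)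
    · rw [key, psi_mulVec]
      funext x
      cases x with
      | inl r =>
        have := congrFun hev r
        simp only [Sum.elim_inl, Pi.smul_apply, smul_eq_mul, this, Sc_mul_toQuat]
        ring
      | inr r =>
        have := congrFun hev r
        simp only [Sum.elim_inr, Pi.smul_apply, smul_eq_mul, this, Pc_mul_toQuat]
        ring
  · rintro ⟨w, hw, hev⟩
    rw [key] at hev
    set v : Fin n → Quaternion ℝ := fun r => toQuat (w (Sum.inl r)) + jq * toQuat (w (Sum.inr r))
      with hv
    have hwv : Sum.elim (fun r => Sc (v r)) (fun r => Pc (v r)) = w := by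
      funext x
      cases x with
      | inl r => simp [hv, Sc_recon]
      | inr r => simp [hv, Pc_recon]
    refine ⟨v, ?_, ?_⟩
    · intro h0
      apply hw
      rw [← hwv]
      funext x
      cases x with
      | inl r => simp [congrFun h0 r, Sc_zero]
      | inr r => simp [congrFun h0 r, Pc_zero]
    · have hmv := psi_mulVec n M v
      rw [hwv, hev] at hmv
      funext r
      have h1 : Sc (M.mulVec v r) = lam * w (Sum.inl r) := by
        have := congrFun hmv (Sum.inl r); simpa using this.symm
      have h2 : Pc (M.mulVec v r) = lam * w (Sum.inr r) := by
        have := congrFun hmv (Sum.inr r); simpa using this.symm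
      refine ext_ScPc ?_ ?_
      · rw [h1, Sc_mul_toQuat]
        have : Sc (v r) = w (Sum.inl r) := by simp [hv, Sc_recon]
        rw [this]; ring
      · rw [h2, Pc_mul_toQuat]
        have : Pc (v r) = w (Sum.inr r) := by simp [hv, Pc_recon]
        rw [this]; ring
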